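/- arXiv:1711.11412 — 2 statements merged into one kernel-verified Lean document; each statement's English description precedes it below -/
import Mathlib

section
/- Let c₁, …, c_n and K be positive integers with max{c_i : i ∈ [n]} < K < c₁ + … + c_n. Let T be a star with center vertex x and leaves y₁, …, y_{n+1}, and let w : V(T) → ℕ be given by w(x) = 1, w(y_i) = c_i for i ∈ [n], and w(y_{n+1}) = K + 1. Then K + 1 ≤ cs(T,w) ≤ K + 2. -/
/-- Total weight of a set of vertices. -/
noncomputable def setWeight {V : Type*} (w : V → ℕ) (A : Set V) : ℕ := ∑ᶠ u ∈ A, w u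

/-- `C` is the vertex set of a connected component of the subgraph of `G` induced by `S`. -/
def IsCompOf {V : Type*} (G : SimpleGraph V) (S C : Set V) : Prop :=
  C ⊆ S ∧ (G.induce C).Connected ∧ ∀ u ∈ C, ∀ v ∈ S, G.Adj u v → v ∈ C

/-- `S` is a (nonempty) `w`-safe set of `G`. -/
def IsSafeSet {V : Type*} (G : SimpleGraph V) (w : V → ℕ) (S : Set V) : Prop :=
  S.Nonempty ∧ ∀ C D : Set V, IsCompOf G S C → IsCompOf G Sᶜ D →
    (∃ u ∈ C, ∃ v ∈ D, G.Adj u v) → setWeight w D ≤ setWeight w C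

/-- The star with center `none` and leaves `some i` for `i : Fin m`. -/
def starGraph (m : ℕ) : SimpleGraph (Option (Fin m)) where
  Adj a b := (a = none ∧ b ≠ none) ∨ (b = none ∧ a ≠ none)
  symm := ⟨by intro a b h; tauto⟩
  loopless := ⟨by rintro a (⟨h1, h2⟩ | ⟨h1, h2⟩) <;> exact h2 h1⟩

/-- The weight function on the star: the center gets weight `1`, the first `n` leaves get
weights `c 0, …, c (n-1)`, and the last leaf gets weight `K + 1`. -/
def starW (n : ℕ) (c : Fin n → ℕ) (K : ℕ) : Option (Fin (n + 1)) → ℕ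
  | none => 1
  | some i => if h : (i : ℕ) < n then c ⟨i, h⟩ else K + 1

/-- The connected safe number `cs(G,w)`. -/
noncomputable def connSafeNum {V : Type*} (G : SimpleGraph V) (w : V → ℕ) : ℕ :=
  sInf {m | ∃ S : Set V, IsSafeSet G w S ∧ (G.induce S).Connected ∧ setWeight w S = m}

/- ------------------- auxiliary lemmas ------------------- -/

lemma setWeight_eq_sum {V : Type*} (w : V → ℕ) (A : Set V) (hA : A.Finite) :
    setWeight w A = ∑ u ∈ hA.toFinset, w u := by
  rw [setWeight, ← finsum_mem_coe_finset, Set.Finite.coe_toFinset]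

lemma le_setWeight {V : Type*} [Finite V] (w : V → ℕ) {A : Set V} {a : V} (ha : a ∈ A) :
    w a ≤ setWeight w A := by
  rw [setWeight_eq_sum w A A.toFinite]
  exact Finset.single_le_sum (fun i _ => Nat.zero_le _) (by simpa using ha)

lemma star_connected_singleton {n : ℕ} {S : Set (Option (Fin (n + 1)))}
    (hconn : ((starGraph (n + 1)).induce S).Connected) (h0 : none ∉ S) :
    ∃ a, S = {a} := by
  have hbot : (starGraph (n + 1)).induce S = ⊥ := by
    ext u v
    simp only [SimpleGraph.bot_adj, iff_false]
    rintro (⟨h1, h2⟩ | ⟨h1, h2⟩)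
    · exact h0 (h1 ▸ u.2)
    · exact h0 (h1 ▸ v.2)
  obtain ⟨⟨a, ha⟩⟩ := hconn.nonempty
  refine ⟨a, Set.eq_singleton_iff_unique_mem.2 ⟨ha, fun b hb => ?_⟩⟩
  have hr := hconn.preconnected ⟨b, hb⟩ ⟨a, ha⟩
  rw [hbot, SimpleGraph.reachable_bot] at hr
  exact congrArg Subtype.val hr

lemma star_induce_connected_of_none_mem {n : ℕ} {A : Set (Option (Fin (n + 1)))}
    (h0 : none ∈ A) : ((starGraph (n + 1)).induce A).Connected := by
  rw [SimpleGraph.connected_iff]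
  have key : ∀ (x : Option (Fin (n + 1))) (hx : x ∈ A),
      ((starGraph (n + 1)).induce A).Reachable ⟨x, hx⟩ ⟨none, h0⟩ := by
    intro x hx
    by_cases h : x = none
    · subst h; exact SimpleGraph.Reachable.refl _
    · exact SimpleGraph.Adj.reachable (Or.inr ⟨rfl, h⟩)
  exact ⟨fun a b => (key a.1 a.2).trans (key b.1 b.2).symm, ⟨⟨none, h0⟩⟩⟩

lemma induce_singleton_connected {V : Type*} (G : SimpleGraph V) (a : V) :
    (G.induce {a}).Connected := by
  rw [SimpleGraph.connected_iff]
  refine ⟨fun u v => ?_, ⟨⟨a, rfl⟩⟩⟩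
  have : u = v := Subtype.ext (u.2.trans v.2.symm)
  rw [this]

lemma starW_last (n : ℕ) (c : Fin n → ℕ) (K : ℕ) :
    starW n c K (some (Fin.last n)) = K + 1 := by
  simp [starW]

theorem connSafeNum_star_bounds (n : ℕ) (c : Fin n → ℕ) (K : ℕ)
    (hc : ∀ i, 0 < c i) (hK : 0 < K) (hmax : ∀ i, c i < K) (hsum : K < ∑ i, c i) :
    K + 1 ≤ connSafeNum (starGraph (n + 1)) (starW n c K) ∧
      connSafeNum (starGraph (n + 1)) (starW n c K) ≤ K + 2 := by
  set G := starGraph (n + 1) with hG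
  set w := starW n c K with hw
  set L : Option (Fin (n + 1)) := some (Fin.last n) with hLdef
  have hLne : (none : Option (Fin (n + 1))) ≠ L := by simp [hLdef]
  have hwL : w L = K + 1 := starW_last n c K
  have hwnone : w none = 1 := rfl
  -- weight of a non-last leaf is < K
  have hleaf : ∀ a : Option (Fin (n + 1)), a ≠ none → a ≠ L → w a < K := by
    intro a h1 h2
    obtain ⟨i, rfl⟩ := Option.ne_none_iff_exists'.1 h1
    have hi : (i : ℕ) < n := by
      rcases Nat.lt_or_ge (i : ℕ) n with h | h
      · exact h
      · exfalso; apply h2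
        have : (i : ℕ) = n := le_antisymm (Nat.lt_succ_iff.1 i.2) h
        simp [hLdef, Fin.ext_iff, this]
    simpa [hw, starW, hi] using hmax ⟨i, hi⟩
  -- the witness set {none, L}
  set S₀ : Set (Option (Fin (n + 1))) := {none, L} with hS₀
  have h0S₀ : none ∈ S₀ := Or.inl rfl
  have hLS₀ : L ∈ S₀ := Or.inr rfl
  have hS₀conn : (G.induce S₀).Connected := star_induce_connected_of_none_mem h0S₀
  have hS₀w : setWeight w S₀ = K + 2 := by
    rw [hS₀, setWeight, finsum_mem_pair hLne, hwnone, hwL]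
    omega
  have hS₀safe : IsSafeSet G w S₀ := by
    refine ⟨⟨none, h0S₀⟩, ?_⟩
    rintro C D ⟨hCsub, hCconn, hCcl⟩ ⟨hDsub, hDconn, hDcl⟩ -
    -- C = S₀
    have hCS₀ : C = S₀ := by
      obtain ⟨⟨c0, hc0⟩⟩ := hCconn.nonempty
      have hboth : none ∈ C ∧ L ∈ C := by
        rcases hCsub hc0 with h | h
        · subst h
          exact ⟨hc0, hCcl none hc0 L hLS₀ (Or.inl ⟨rfl, hLne.symm⟩)⟩
        · subst h
          exact ⟨hCcl L hc0 none h0S₀ (Or.inr ⟨rfl, hLne.symm⟩), hc0⟩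
      refine Set.Subset.antisymm hCsub ?_
      rintro a (rfl | rfl)
      · exact hboth.1
      · exact hboth.2
    -- D is a singleton leaf
    have h0D : none ∉ D := fun h => (hDsub h) h0S₀
    obtain ⟨a, rfl⟩ := star_connected_singleton hDconn h0D
    have haD : a ∈ ({a} : Set _) := rfl
    have ha1 : a ≠ none := fun h => h0D (h ▸ haD)
    have ha2 : a ≠ L := fun h => (hDsub haD) (h ▸ hLS₀)
    have := hleaf a ha1 ha2
    rw [hCS₀, hS₀w, setWeight, finsum_mem_singleton]
    omega
  have hmem : K + 2 ∈ {m | ∃ S, IsSafeSet G w S ∧ (G.induce S).Connected ∧ setWeight w S = m} :=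
    ⟨S₀, hS₀safe, hS₀conn, hS₀w⟩
  constructor
  · -- lower bound
    refine le_csInf ⟨K + 2, hmem⟩ ?_
    rintro m ⟨S, hsafe, hconn, rfl⟩
    by_cases hLS : L ∈ S
    · have := le_setWeight w hLS
      omega
    by_cases h0 : none ∈ S
    · -- component {L} of Sᶜ
      have hDL : IsCompOf G Sᶜ {L} := by
        refine ⟨Set.singleton_subset_iff.2 hLS, induce_singleton_connected G L, ?_⟩
        rintro u rfl v hv hadj
        rcases hadj with ⟨h1, h2⟩ | ⟨h1, h2⟩
        · exact absurd h1 hLne.symm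
        · exact absurd (h1 ▸ h0) hv
      have hCS : IsCompOf G S S := ⟨le_refl _, hconn, fun u hu v hv _ => hv⟩
      have := hsafe.2 S {L} hCS hDL ⟨none, h0, L, rfl, Or.inl ⟨rfl, hLne.symm⟩⟩
      rw [setWeight, finsum_mem_singleton, hwL] at this
      exact this
    · -- S is a single non-last leaf: contradiction with safety
      exfalso
      obtain ⟨a, rfl⟩ := star_connected_singleton hconn h0
      have haS : a ∈ ({a} : Set _) := rfl
      have ha1 : a ≠ none := fun h => h0 (h ▸ haS)
      have ha2 : a ≠ L := fun h => hLS (h ▸ haS)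
      have hcomp : IsCompOf G ({a} : Set _)ᶜ ({a} : Set _)ᶜ := by
        refine ⟨le_refl _, star_induce_connected_of_none_mem ?_, fun u hu v hv _ => hv⟩
        exact fun h => ha1 (h.symm)
      have hCS : IsCompOf G ({a} : Set _) ({a} : Set _) :=
        ⟨le_refl _, hconn, fun u hu v hv _ => hv⟩
      have hsafe2 := hsafe.2 _ _ hCS hcomp
        ⟨a, rfl, none, fun h => ha1 h.symm, Or.inr ⟨rfl, ha1⟩⟩
      have hLc : L ∈ ({a} : Set _)ᶜ := fun h => ha2 h.symm
      have h1 := le_setWeight w hLc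
      have h3 : setWeight w ({a} : Set _) = w a := by
        rw [setWeight, finsum_mem_singleton]
      rw [h3] at hsafe2
      have h2 := hleaf a ha1 ha2
      omega
  · exact Nat.sInf_le hmem
end

section
/- Let T be a tree, let w : V(T) → ℕ with w(V(T)) > 0, let ∂W be a positive integer, let W* = cs(T,w), and let L = {u ∈ V(T) : w(u) > ∂W}. Suppose there is no connected set S of vertices of T such that W* + ∂W ≤ w(S) ≤ W* + 2∂W and w(D) ≤ W* for every connected component D of T − S. Then for every nonempty connected w-safe set S* with w(S*) = W*, the connected component T* of T − (L ∖ S*) that contains S* satisfies w(T*) < W* + ∂W, and V(T*) is a nonempty connected w-safe set in T. -/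
open scoped Classical

section Aux

variable {V : Type*} {G : SimpleGraph V}

/-- Reachability within a set of vertices. -/
def ReachIn (G : SimpleGraph V) (A : Set V) (u v : V) : Prop :=
  ∃ p : G.Walk u v, ∀ x ∈ p.support, x ∈ A

lemma ReachIn.mem_left {A : Set V} {u v : V} (h : ReachIn G A u v) : u ∈ A :=
  h.choose_spec u h.choose.start_mem_support

lemma ReachIn.mem_right {A : Set V} {u v : V} (h : ReachIn G A u v) : v ∈ A :=
  h.choose_spec v h.choose.end_mem_support

lemma ReachIn.refl {A : Set V} {u : V} (hu : u ∈ A) : ReachIn G A u u :=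
  ⟨SimpleGraph.Walk.nil, by simpa using hu⟩

lemma ReachIn.symm {A : Set V} {u v : V} (h : ReachIn G A u v) : ReachIn G A v u := by
  obtain ⟨p, hp⟩ := h
  exact ⟨p.reverse, by intro x hx; exact hp x (by simpa using hx)⟩

lemma ReachIn.trans {A : Set V} {u v x : V} (h : ReachIn G A u v) (h' : ReachIn G A v x) :
    ReachIn G A u x := by
  obtain ⟨p, hp⟩ := h; obtain ⟨q, hq⟩ := h'
  exact ⟨p.append q, fun y hy =>
    ((SimpleGraph.Walk.mem_support_append_iff _ _).1 hy).elim (hp y) (hq y)⟩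

lemma ReachIn.mono {A B : Set V} (hAB : A ⊆ B) {u v : V} (h : ReachIn G A u v) :
    ReachIn G B u v := by
  obtain ⟨p, hp⟩ := h
  exact ⟨p, fun x hx => hAB (hp x hx)⟩

lemma ReachIn.of_adj {A : Set V} {u v : V} (hu : u ∈ A) (hv : v ∈ A) (h : G.Adj u v) :
    ReachIn G A u v := by
  classical
  refine ⟨SimpleGraph.Walk.cons h SimpleGraph.Walk.nil, ?_⟩
  intro x hx
  simp only [SimpleGraph.Walk.support_cons, SimpleGraph.Walk.support_nil,
    List.mem_cons, List.mem_singleton] at hx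
  rcases hx with rfl | rfl | h'
  · exact hu
  · exact hv
  · exact absurd h' List.not_mem_nil

lemma reachIn_of_mem_support {A : Set V} {u v : V} (p : G.Walk u v)
    (hp : ∀ x ∈ p.support, x ∈ A) {x : V} (hx : x ∈ p.support) : ReachIn G A u x := by
  classical
  exact ⟨p.takeUntil x hx, fun y hy => hp y (p.support_takeUntil_subset hx hy)⟩

lemma reachable_induce_of_walk {A : Set V} :
    ∀ {u v : V} (p : G.Walk u v) (_ : ∀ x ∈ p.support, x ∈ A) (hu : u ∈ A) (hv : v ∈ A),
      (G.induce A).Reachable ⟨u, hu⟩ ⟨v, hv⟩ := by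
  intro u v p
  induction p with
  | nil => intro _ hu hv; exact SimpleGraph.Reachable.refl _
  | @cons a b c h q ih =>
    intro hp hu hv
    have hb : b ∈ A := hp b (by simp [SimpleGraph.Walk.support_cons])
    have h1 : (G.induce A).Adj ⟨a, hu⟩ ⟨b, hb⟩ := h
    exact h1.reachable.trans (ih (fun x hx => hp x (by simp [SimpleGraph.Walk.support_cons, hx]))
      hb hv)

lemma induce_connected_iff {A : Set V} :
    (G.induce A).Connected ↔ A.Nonempty ∧ ∀ u ∈ A, ∀ v ∈ A, ReachIn G A u v := by
  constructor
  · intro h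
    refine ⟨Set.nonempty_coe_sort.1 h.nonempty, fun u hu v hv => ?_⟩
    obtain ⟨q⟩ := h.preconnected ⟨u, hu⟩ ⟨v, hv⟩
    refine ⟨q.map (SimpleGraph.Embedding.induce A).toHom, ?_⟩
    intro x hx
    replace hx : x ∈ q.support.map (SimpleGraph.Embedding.induce (G := G) A).toHom := by
      rw [← SimpleGraph.Walk.support_map]; exact hx
    rw [List.mem_map] at hx
    obtain ⟨y, _, rfl⟩ := hx
    exact y.2
  · rintro ⟨hne, h⟩
    obtain ⟨a, ha⟩ := hne
    haveI : Nonempty ↥A := ⟨⟨a, ha⟩⟩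
    refine ⟨fun x y => ?_⟩
    obtain ⟨p, hp⟩ := h x x.2 y y.2
    exact reachable_induce_of_walk p hp x.2 y.2

/-- The component of `A` containing `d`. -/
def compIn (G : SimpleGraph V) (A : Set V) (d : V) : Set V :=
  {v | v ∈ A ∧ ReachIn G A d v}

lemma mem_compIn_self {A : Set V} {d : V} (hd : d ∈ A) : d ∈ compIn G A d :=
  ⟨hd, ReachIn.refl hd⟩

lemma compIn_isCompOf {A : Set V} {d : V} (hd : d ∈ A) : IsCompOf G A (compIn G A d) := by
  refine ⟨fun v hv => hv.1, ?_, ?_⟩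
  · rw [induce_connected_iff]
    refine ⟨⟨d, mem_compIn_self hd⟩, fun u hu v hv => ?_⟩
    obtain ⟨p, hp⟩ := hu.2.symm.trans hv.2
    refine ⟨p, fun x hx => ⟨hp x hx, hu.2.trans (reachIn_of_mem_support p hp hx)⟩⟩
  · intro u hu v hv h
    exact ⟨hv, hu.2.trans (ReachIn.of_adj hu.1 hv h)⟩

lemma comp_subset_compIn {A B : Set V} (hAB : A ⊆ B) {C : Set V} {d : V}
    (hC : IsCompOf G A C) (hd : d ∈ C) : C ⊆ compIn G B d := by
  intro v hv
  have hr : ReachIn G C d v := (induce_connected_iff.1 hC.2.1).2 d hd v hv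
  exact ⟨hAB (hC.1 hv), hr.mono (hC.1.trans hAB)⟩

lemma mem_of_walk_closed {A C : Set V}
    (hclosed : ∀ u ∈ C, ∀ v ∈ A, G.Adj u v → v ∈ C) :
    ∀ {u v : V} (p : G.Walk u v), (∀ x ∈ p.support, x ∈ A) → u ∈ C → v ∈ C := by
  intro u v p
  induction p with
  | nil => intro _ hu; exact hu
  | @cons a b c h q ih =>
    intro hp hu
    have hb : b ∈ A := hp b (by simp [SimpleGraph.Walk.support_cons])
    exact ih (fun x hx => hp x (by simp [SimpleGraph.Walk.support_cons, hx]))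
      (hclosed a hu b hb h)

lemma isCompOf_eq_self {A C : Set V} (hC : IsCompOf G A C)
    (hconn : (G.induce A).Connected) : C = A := by
  refine Set.Subset.antisymm hC.1 fun v hv => ?_
  obtain ⟨c, hc⟩ : C.Nonempty := Set.nonempty_coe_sort.1 hC.2.1.nonempty
  obtain ⟨p, hp⟩ := (induce_connected_iff.1 hconn).2 c (hC.1 hc) v hv
  exact mem_of_walk_closed hC.2.2 p hp hc

lemma exists_crossing {D : Set V} :
    ∀ {u v : V} (p : G.Walk u v), u ∈ D → v ∉ D →
      ∃ a ∈ p.support, ∃ b ∈ p.support, a ∈ D ∧ b ∉ D ∧ G.Adj a b := by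
  intro u v p
  induction p with
  | nil => intro hu hv; exact absurd hu hv
  | @cons a b c h q ih =>
    intro hu hv
    by_cases hb : b ∈ D
    · obtain ⟨x, hx, y, hy, h1, h2, h3⟩ := ih hb hv
      exact ⟨x, by simp [SimpleGraph.Walk.support_cons, hx], y,
        by simp [SimpleGraph.Walk.support_cons, hy], h1, h2, h3⟩
    · exact ⟨a, by simp [SimpleGraph.Walk.support_cons], b,
        by simp [SimpleGraph.Walk.support_cons], hu, hb, h⟩

variable [Fintype V]

omit [Fintype V] in
lemma setWeight_eq (w : V → ℕ) {A : Set V} (hA : A.Finite) :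
    setWeight w A = ∑ x ∈ hA.toFinset, w x := by
  rw [setWeight, ← finsum_mem_coe_finset, Set.Finite.coe_toFinset]

lemma setWeight_mono (w : V → ℕ) {A B : Set V} (h : A ⊆ B) :
    setWeight w A ≤ setWeight w B := by
  rw [setWeight_eq w (Set.toFinite A), setWeight_eq w (Set.toFinite B)]
  exact Finset.sum_le_sum_of_subset (Set.Finite.toFinset_subset_toFinset.2 h)

lemma setWeight_insert_le (w : V → ℕ) (A : Set V) (v : V) :
    setWeight w (insert v A) ≤ setWeight w A + w v := by
  by_cases hv : v ∈ A
  · rw [Set.insert_eq_self.2 hv]; exact Nat.le_add_right _ _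
  · rw [setWeight_eq w (Set.toFinite (insert v A)), setWeight_eq w (Set.toFinite A)]
    have ht : (Set.toFinite (insert v A)).toFinset = insert v (Set.toFinite A).toFinset := by
      ext x; simp only [Set.Finite.mem_toFinset, Finset.mem_insert, Set.mem_insert_iff]
    rw [ht, Finset.sum_insert (by simpa using hv)]
    omega

end Aux

theorem case1_component_is_safe {V : Type*} [Fintype V] (G : SimpleGraph V) (hT : G.IsTree)
    (w : V → ℕ) (hw : 0 < setWeight w Set.univ) (dW : ℕ) (hdW : 0 < dW)
    (Wstar : ℕ) (hWstar : Wstar = connSafeNum G w)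
    (L : Set V) (hL : L = {u | dW < w u})
    (hno : ¬ ∃ S : Set V, (G.induce S).Connected ∧
        Wstar + dW ≤ setWeight w S ∧ setWeight w S ≤ Wstar + 2 * dW ∧
        ∀ D : Set V, IsCompOf G Sᶜ D → setWeight w D ≤ Wstar)
    (Sstar : Set V) (hsafe : IsSafeSet G w Sstar) (hconn : (G.induce Sstar).Connected)
    (hwS : setWeight w Sstar = Wstar)
    (Tstar : Set V) (hTstar : IsCompOf G (L \ Sstar)ᶜ Tstar) (hsub : Sstar ⊆ Tstar) :
    setWeight w Tstar < Wstar + dW ∧ IsSafeSet G w Tstar ∧ (G.induce Tstar).Connected := by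
  classical
  have hG : G.Connected := hT.isConnected
  -- every component of the complement of a connected superset of `Sstar` is light
  have hkey : ∀ S : Set V, Sstar ⊆ S → ∀ D : Set V, IsCompOf G Sᶜ D →
      setWeight w D ≤ Wstar := by
    intro S hS D hD
    obtain ⟨d, hd⟩ : D.Nonempty := Set.nonempty_coe_sort.1 hD.2.1.nonempty
    have hdA : d ∈ Sstarᶜ := fun h => (hD.1 hd) (hS h)
    have hD' := compIn_isCompOf (G := G) hdA
    have hsubD : D ⊆ compIn G Sstarᶜ d :=
      comp_subset_compIn (Set.compl_subset_compl.2 hS) hD hd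
    obtain ⟨s, hs⟩ := hsafe.1
    obtain ⟨p⟩ := hG.preconnected d s
    have hds : s ∉ compIn G Sstarᶜ d := fun h => (hD'.1 h) hs
    obtain ⟨a, _, b, _, ha, hb, hab⟩ := exists_crossing p (mem_compIn_self hdA) hds
    have hbS : b ∈ Sstar := by
      by_contra h
      exact hb (hD'.2.2 a ha b h hab)
    have hCcomp : IsCompOf G Sstar Sstar := ⟨subset_rfl, hconn, fun _ _ v hv _ => hv⟩
    have hle := hsafe.2 Sstar (compIn G Sstarᶜ d) hCcomp hD' ⟨b, hbS, a, ha, hab.symm⟩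
    calc setWeight w D ≤ setWeight w (compIn G Sstarᶜ d) := setWeight_mono w hsubD
      _ ≤ setWeight w Sstar := hle
      _ = Wstar := hwS
  -- vertices of `Tstar` outside `Sstar` are light
  have hsmall : ∀ v ∈ Tstar, v ∉ Sstar → w v ≤ dW := by
    intro v hv hvS
    have h1 : v ∉ L \ Sstar := hTstar.1 hv
    by_contra h
    exact h1 ⟨by rw [hL]; exact Nat.lt_of_not_le h, hvS⟩
  have hTconn : (G.induce Tstar).Connected := hTstar.2.1
  -- the weight bound
  have hbound : setWeight w Tstar < Wstar + dW := by
    by_contra hbig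
    push_neg at hbig
    have grow : ∀ n (S : Set V), Sstar ⊆ S → S ⊆ Tstar → (G.induce S).Connected →
        setWeight w S < Wstar + dW → (Tstar \ S).ncard ≤ n → False := by
      intro n
      induction n with
      | zero =>
        intro S _ _ _ h4 h5
        have h6 : Tstar \ S = ∅ := by
          rw [← Set.ncard_eq_zero (Set.toFinite _)]
          omega
        have h7 : Tstar ⊆ S := Set.diff_eq_empty.1 h6
        have := setWeight_mono w h7
        omega
      | succ n ih =>
        intro S h1 h2 h3 h4 h5
        have hne : (Tstar \ S).Nonempty := by
          by_contra h
          rw [Set.not_nonempty_iff_eq_empty] at h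
          have h7 : Tstar ⊆ S := Set.diff_eq_empty.1 h
          have := setWeight_mono w h7
          omega
        obtain ⟨t, ht⟩ := hne
        obtain ⟨s, hsS⟩ := hsafe.1
        obtain ⟨p, hp⟩ := (induce_connected_iff.1 hTconn).2 t ht.1 s (h2 (h1 hsS))
        obtain ⟨a, hap, b, hbp, haD, hbD, hab⟩ :=
          exists_crossing (D := {x | x ∉ S}) p ht.2 (by simpa using h1 hsS)
        have haT : a ∈ Tstar := hp a hap
        have hbS : b ∈ S := by simpa using hbD
        have haS : a ∉ S := haD
        have hconn' : (G.induce (insert a S)).Connected := by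
          have hu : S ∪ {b, a} = insert a S := by
            ext x
            simp only [Set.mem_union, Set.mem_insert_iff, Set.mem_singleton_iff]
            constructor
            · rintro (h | rfl | rfl)
              · exact Or.inr h
              · exact Or.inr hbS
              · exact Or.inl rfl
            · rintro (rfl | h)
              · exact Or.inr (Or.inr rfl)
              · exact Or.inl h
          rw [← hu]
          exact SimpleGraph.induce_union_connected h3.preconnected
            (SimpleGraph.induce_pair_connected_of_adj hab.symm).preconnected ⟨b, hbS, Or.inl rfl⟩
        have hwa : w a ≤ dW := hsmall a haT (fun h => haS (h1 h))
        have hwins : setWeight w (insert a S) ≤ setWeight w S + dW :=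
          le_trans (setWeight_insert_le w S a) (by omega)
        by_cases hcase : setWeight w (insert a S) < Wstar + dW
        · refine ih (insert a S) (h1.trans (Set.subset_insert a S))
            (Set.insert_subset haT h2) hconn' hcase ?_
          have hss : (Tstar \ insert a S) ⊂ (Tstar \ S) := by
            constructor
            · intro x hx
              exact ⟨hx.1, fun h => hx.2 (Set.mem_insert_of_mem a h)⟩
            · intro hcon
              exact (hcon ⟨haT, haS⟩).2 (Set.mem_insert a S)
          have := Set.ncard_lt_ncard hss (Set.toFinite _)
          omega
        · refine hno ⟨insert a S, hconn', Nat.le_of_not_lt hcase, by omega, ?_⟩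
          intro D hD
          exact hkey (insert a S) (h1.trans (Set.subset_insert a S)) D hD
    exact grow (Fintype.card V) Sstar subset_rfl hsub hconn (by omega)
      (le_trans (Set.ncard_le_ncard (Set.subset_univ _) (Set.toFinite _))
        (le_of_eq (by rw [Set.ncard_univ]; exact Nat.card_eq_fintype_card)))
  refine ⟨hbound, ⟨hsafe.1.mono hsub, ?_⟩, hTconn⟩
  intro C D hC hD _
  have hCeq : C = Tstar := isCompOf_eq_self hC hTconn
  have h1 : setWeight w D ≤ Wstar := hkey Tstar hsub D hD
  have h2 : setWeight w Sstar ≤ setWeight w Tstar := setWeight_mono w hsub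
  rw [hCeq]
  omega
end
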